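/- Bi-representation theorem: every full LP^B_CS algebra A over T is bi-isomorphic to a full LP^B_CS set algebra; i.e., there is a pair (f,g) of Boolean isomorphisms, f from A onto a set algebra and g from T onto a set algebra equipped with extensions of · and !, satisfying f(□_α(φ)) = □'_{g(α)}(φ), g(I(c)) = I'(c), g(α·_T β) = g(α)·' g(β), and g(!_T α) = !' g(α). -/

import Mathlib

/-- Proof terms of LP^B: variables, constants, the Boolean constant 0 and the
operators −, +, · and !. -/
inductive BTm : Type where
  | var : ℕ → BTm
  | const : ℕ → BTm
  | zero : BTm
  | neg : BTm → BTm
  | sum : BTm → BTm → BTm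
  | app : BTm → BTm → BTm
  | bang : BTm → BTm

/-- The Boolean unit term 1 := −0. -/
def BTm.one : BTm := .neg .zero

/-- The Boolean meet of terms s ⊙ t := −(−s + −t). -/
def BTm.prod (s t : BTm) : BTm := .neg (.sum (.neg s) (.neg t))

/-- Formulas of LP^B, including term equations s ≈ t. -/
inductive BFm : Type where
  | prop : ℕ → BFm
  | eq : BTm → BTm → BFm
  | bot : BFm
  | neg : BFm → BFm
  | or : BFm → BFm → BFm
  | box : BTm → BFm → BFm

def BFm.imp (φ ψ : BFm) : BFm := .or (.neg φ) ψ
def BFm.and (φ ψ : BFm) : BFm := .neg (.or (.neg φ) (.neg ψ))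
def BFm.iff (φ ψ : BFm) : BFm := (φ.imp ψ).and (ψ.imp φ)
def BFm.top : BFm := .neg .bot

/-- Substitution of the term s for the term variable x in a term. -/
def BTm.subst (x : ℕ) (s : BTm) : BTm → BTm
  | .var y => if y = x then s else .var y
  | .const c => .const c
  | .zero => .zero
  | .neg t => .neg (BTm.subst x s t)
  | .sum a b => .sum (BTm.subst x s a) (BTm.subst x s b)
  | .app a b => .app (BTm.subst x s a) (BTm.subst x s b)
  | .bang t => .bang (BTm.subst x s t)

/-- Substitution of the term s for the term variable x in a formula. -/
def BFm.subst (x : ℕ) (s : BTm) : BFm → BFm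
  | .prop p => .prop p
  | .eq a b => .eq (a.subst x s) (b.subst x s)
  | .bot => .bot
  | .neg φ => .neg (BFm.subst x s φ)
  | .or φ ψ => .or (BFm.subst x s φ) (BFm.subst x s ψ)
  | .box t φ => .box (t.subst x s) (BFm.subst x s φ)

/-- Axioms of LP^B: the LP axioms, the Boolean algebra axioms B1–B5 for terms and
the equality axioms Eq1, Eq2. -/
inductive BAxiom : BFm → Prop where
  | pl1 (φ ψ : BFm) : BAxiom (φ.imp (.or φ ψ))
  | pl2 (φ ψ : BFm) : BAxiom ((BFm.or φ ψ).imp (.or ψ φ))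
  | pl3 (φ : BFm) : BAxiom ((BFm.or φ φ).imp φ)
  | pl4 (φ ψ χ : BFm) : BAxiom ((φ.imp ψ).imp ((BFm.or χ φ).imp (.or χ ψ)))
  | pl5 (φ : BFm) : BAxiom (BFm.bot.imp φ)
  | appl (s t : BTm) (φ ψ : BFm) :
      BAxiom ((BFm.box s (φ.imp ψ)).imp ((BFm.box t φ).imp (.box (.app s t) ψ)))
  | sum (s t : BTm) (φ : BFm) :
      BAxiom (((BFm.box s φ).or (.box t φ)).imp (.box (.sum s t) φ))
  | jT (t : BTm) (φ : BFm) : BAxiom ((BFm.box t φ).imp φ)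
  | j4 (t : BTm) (φ : BFm) : BAxiom ((BFm.box t φ).imp (.box (.bang t) (.box t φ)))
  | b1a (s t : BTm) : BAxiom (.eq (.sum s t) (.sum t s))
  | b1b (s t : BTm) : BAxiom (.eq (s.prod t) (t.prod s))
  | b2a (s t u : BTm) : BAxiom (.eq (.sum s (.sum t u)) (.sum (.sum s t) u))
  | b2b (s t u : BTm) : BAxiom (.eq (s.prod (t.prod u)) ((s.prod t).prod u))
  | b3a (s : BTm) : BAxiom (.eq (.sum s .zero) s)
  | b3b (s : BTm) : BAxiom (.eq (s.prod .one) s)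
  | b4a (s : BTm) : BAxiom (.eq (.sum s (.neg s)) .one)
  | b4b (s : BTm) : BAxiom (.eq (s.prod (.neg s)) .zero)
  | b5a (s t u : BTm) :
      BAxiom (.eq (.sum s (t.prod u)) ((BTm.sum s t).prod (.sum s u)))
  | b5b (s t u : BTm) :
      BAxiom (.eq (s.prod (.sum t u)) (.sum (s.prod t) (s.prod u)))
  | eq1 (t : BTm) : BAxiom (.eq t t)
  | eq2 (s t : BTm) (x : ℕ) (φ : BFm) :
      BAxiom (((BFm.eq s t).and (φ.subst x s)).imp (φ.subst x t))

/-- A constant specification for LP^B. -/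
abbrev BConstSpec := Set (ℕ × BFm)

/-- CS is a genuine constant specification: it only justifies axiom instances. -/
def BConstSpec.IsCS (CS : BConstSpec) : Prop := ∀ p ∈ CS, BAxiom p.2

/-- CS is axiomatically appropriate. -/
def BConstSpec.AxApp (CS : BConstSpec) : Prop := ∀ φ, BAxiom φ → ∃ c, (c, φ) ∈ CS

/-- Derivability in LP^B_CS; rules: modus ponens and Int (from φ infer 1:φ). -/
inductive BDeriv (CS : BConstSpec) : BFm → Prop where
  | ax {φ} : BAxiom φ → BDeriv CS φ
  | cs {c φ} : (c, φ) ∈ CS → BDeriv CS (.box (.const c) φ)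
  | mp {φ ψ} : BDeriv CS (φ.imp ψ) → BDeriv CS φ → BDeriv CS ψ
  | int {φ} : BDeriv CS φ → BDeriv CS (.box BTm.one φ)

/-- A term structure: a Boolean algebra of term denotations equipped with the extra
operators · and !. -/
structure TmStruct (T : Type) where
  app : T → T → T
  bang : T → T

/-- The denotation t^v_I of a term, given an interpretation I of constants and an
assignment v of variables (0 denotes ⊥, − the complement and + the join). -/
def denTm {T : Type} [BooleanAlgebra T] (S : TmStruct T) (I : ℕ → T) (v : ℕ → T) :
    BTm → T
  | .var x => v x
  | .const c => I c
  | .zero => ⊥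
  | .neg t => (denTm S I v t)ᶜ
  | .sum a b => denTm S I v a ⊔ denTm S I v b
  | .app a b => S.app (denTm S I v a) (denTm S I v b)
  | .bang t => S.bang (denTm S I v t)

open Classical in
/-- The assignment θ̃_v extending a valuation θ: θ̃_v(t:φ) = □_{t^v_I}(φ), and an
equation s ≈ t gets value 1 or 0 according as s^v_I = t^v_I or not. -/
noncomputable def bevalFm {T A : Type} [BooleanAlgebra T] [BooleanAlgebra A]
    (S : TmStruct T) (I : ℕ → T) (box : T → BFm → A) (θ : ℕ → A) (v : ℕ → T) :
    BFm → A
  | .prop p => θ p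
  | .eq s t => if denTm S I v s = denTm S I v t then ⊤ else ⊥
  | .bot => ⊥
  | .neg φ => (bevalFm S I box θ v φ)ᶜ
  | .or φ ψ => bevalFm S I box θ v φ ⊔ bevalFm S I box θ v ψ
  | .box t φ => box (denTm S I v t) φ

/-- The conditions for (S, I, box) over Boolean algebras T (terms) and A (formulas)
to form a full LP^B_CS algebra: Al-Appl, Al-Sum, Al-1, Al-CS, Al-j4 and Al-jT. -/
structure IsFullLPB (CS : BConstSpec) {T A : Type} [BooleanAlgebra T]
    [BooleanAlgebra A] (S : TmStruct T) (I : ℕ → T) (box : T → BFm → A) : Prop where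
  appl : ∀ (α β : T) (φ ψ : BFm), box α (φ.imp ψ) ⊓ box β φ ≤ box (S.app α β) ψ
  sum : ∀ (α β : T) (φ : BFm), box α φ ⊔ box β φ ≤ box (α ⊔ β) φ
  one : ∀ φ : BFm, BDeriv CS φ → box ⊤ φ = ⊤
  cs : ∀ (c : ℕ) (φ : BFm), (c, φ) ∈ CS → box (I c) φ = ⊤
  j4 : ∀ (α : T) (t : BTm) (φ : BFm), box α φ ≤ box (S.bang α) (.box t φ)
  jT : ∀ (α : T) (φ : BFm) (θ : ℕ → A) (v : ℕ → T), box α φ ≤ bevalFm S I box θ v φ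

/-- A field of sets over X: a collection of subsets of X containing ∅ and closed
under complement and union.  Its elements form a set algebra. -/
structure SetField (X : Type) where
  sets : Set (Set X)
  empty_mem : ∅ ∈ sets
  compl_mem : ∀ s ∈ sets, sᶜ ∈ sets
  union_mem : ∀ s ∈ sets, ∀ t ∈ sets, s ∪ t ∈ sets

/-- The Boolean algebra structure `ba` on the elements of the field of sets F is the
set-theoretic one: order is inclusion, ⊥ is ∅, join is union, complement is
set complement. -/
def IsSetBA {X : Type} (F : SetField X) (ba : BooleanAlgebra F.sets) : Prop :=
  letI := ba
  (((⊥ : F.sets) : Set X) = ∅) ∧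
  (∀ a b : F.sets, ((a ⊔ b : F.sets) : Set X) = (a : Set X) ∪ (b : Set X)) ∧
  (∀ a : F.sets, ((aᶜ : F.sets) : Set X) = ((a : Set X))ᶜ) ∧
  (∀ a b : F.sets, a ≤ b ↔ (a : Set X) ⊆ (b : Set X))

/-- A bi-representation of a full LP^B_CS algebra (T, A, S, I, box) as a full LP^B_CS
set algebra: fields of sets for both the term side and the formula side carrying the
set-theoretic Boolean structure, a transported full LP^B_CS algebra structure on them,
and a pair of Boolean isomorphisms (f, g) commuting with □, I, · and !. -/
structure BiRep (CS : BConstSpec) (T A : Type) [BooleanAlgebra T] [BooleanAlgebra A]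
    (S : TmStruct T) (I : ℕ → T) (box : T → BFm → A) where
  X : Type
  Y : Type
  F : SetField X
  G : SetField Y
  baA : BooleanAlgebra F.sets
  baT : BooleanAlgebra G.sets
  isSetA : IsSetBA F baA
  isSetT : IsSetBA G baT
  S' : TmStruct G.sets
  I' : ℕ → G.sets
  box' : G.sets → BFm → F.sets
  full' : letI := baT; letI := baA; IsFullLPB CS S' I' box'
  f : letI := baA; A ≃o F.sets
  g : letI := baT; T ≃o G.sets
  compat_box : ∀ (α : T) (φ : BFm), f (box α φ) = box' (g α) φ
  compat_I : ∀ c : ℕ, g (I c) = I' c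
  compat_app : ∀ α β : T, g (S.app α β) = S'.app (g α) (g β)
  compat_bang : ∀ α : T, g (S.bang α) = S'.bang (g α)


open Order

section Aux

variable {X : Type}

lemma SetField.univ_mem (F : SetField X) : Set.univ ∈ F.sets := by
  simpa using F.compl_mem _ F.empty_mem

lemma SetField.inter_mem (F : SetField X) :
    ∀ s ∈ F.sets, ∀ t ∈ F.sets, s ∩ t ∈ F.sets := by
  intro s hs t ht
  have := F.compl_mem _ (F.union_mem _ (F.compl_mem s hs) _ (F.compl_mem t ht))
  simpa [Set.compl_union] using this

/-- The set-theoretic Boolean algebra structure on a field of sets. -/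
def SetField.ba (F : SetField X) : BooleanAlgebra F.sets :=
  letI : Max F.sets := ⟨fun a b => ⟨a ∪ b, F.union_mem _ a.2 _ b.2⟩⟩
  letI : Min F.sets := ⟨fun a b => ⟨a ∩ b, F.inter_mem _ a.2 _ b.2⟩⟩
  letI : Top F.sets := ⟨⟨Set.univ, F.univ_mem⟩⟩
  letI : Bot F.sets := ⟨⟨∅, F.empty_mem⟩⟩
  letI : Compl F.sets := ⟨fun a => ⟨(a : Set X)ᶜ, F.compl_mem _ a.2⟩⟩
  letI : SDiff F.sets :=
    ⟨fun a b => ⟨(a : Set X) ∩ (b : Set X)ᶜ, F.inter_mem _ a.2 _ (F.compl_mem _ b.2)⟩⟩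
  letI : HImp F.sets :=
    ⟨fun a b => ⟨(a : Set X)ᶜ ∪ (b : Set X), F.union_mem _ (F.compl_mem _ a.2) _ b.2⟩⟩
  Function.Injective.booleanAlgebra (fun a : F.sets => (a : Set X)) Subtype.coe_injective
    Iff.rfl Iff.rfl (fun _ _ => rfl) (fun _ _ => rfl) rfl rfl (fun _ => rfl)
    (fun a b => Set.diff_eq _ _ ▸ rfl) (fun a b => by rw [himp_eq]; exact Set.union_comm _ _)

lemma SetField.ba_isSetBA (F : SetField X) : IsSetBA F F.ba := by
  letI := F.ba
  refine ⟨rfl, fun a b => rfl, fun a => rfl, fun a b => Iff.rfl⟩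

end Aux

section Stone

variable {A : Type} [BooleanAlgebra A]

/-- Points of the Stone space: prime ideals. -/
abbrev StonePt (A : Type) [BooleanAlgebra A] : Type := {J : Order.Ideal A // J.IsPrime}

/-- The Stone map. -/
def stSet (a : A) : Set (StonePt A) := {J | a ∉ J.1}

lemma stSet_bot : stSet (⊥ : A) = ∅ := by
  ext J; simp [stSet, Order.Ideal.bot_mem]

lemma stSet_sup (a b : A) : stSet (a ⊔ b) = stSet a ∪ stSet b := by
  ext J
  constructor
  · intro h
    by_contra hc
    simp only [stSet, Set.mem_setOf_eq, Set.mem_union, not_or, not_not] at h hc ⊢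
    exact h (Order.Ideal.sup_mem hc.1 hc.2)
  · rintro (h | h) hs
    · exact h (J.1.lower le_sup_left hs)
    · exact h (J.1.lower le_sup_right hs)

lemma stSet_compl (a : A) : stSet aᶜ = (stSet a)ᶜ := by
  ext J
  simp only [stSet, Set.mem_setOf_eq, Set.mem_compl_iff, not_not]
  constructor
  · intro h
    exact J.2.mem_or_compl_mem.resolve_right h
  · intro ha hac
    have : (⊤ : A) ∈ J.1 := by
      have := Order.Ideal.sup_mem ha hac
      rwa [sup_compl_eq_top] at this
    exact J.2.toIsProper.top_notMem this

lemma stSet_subset_iff (a b : A) : stSet a ⊆ stSet b ↔ a ≤ b := by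
  constructor
  · intro h
    by_contra hab
    have hd : Disjoint ((Order.PFilter.principal a : Order.PFilter A) : Set A)
        ((Order.Ideal.principal b : Order.Ideal A) : Set A) := by
      rw [Set.disjoint_left]
      intro x hx hx'
      exact hab (le_trans (Order.PFilter.mem_principal.mp hx)
        (Order.Ideal.mem_principal.mp hx'))
    obtain ⟨J, hJp, hJle, hJd⟩ := DistribLattice.prime_ideal_of_disjoint_filter_ideal hd
    have hbJ : b ∈ J := hJle (Order.Ideal.mem_principal.mpr le_rfl)
    have haJ : a ∉ (J : Set A) :=
      Set.disjoint_left.mp hJd (Order.PFilter.mem_principal.mpr le_rfl)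
    exact (h (show (⟨J, hJp⟩ : StonePt A) ∈ stSet a from haJ)) hbJ
  · intro hab J hJ hb
    exact hJ (J.1.lower hab hb)

lemma stSet_injective : Function.Injective (stSet (A := A)) := fun a b h =>
  le_antisymm ((stSet_subset_iff _ _).mp h.le) ((stSet_subset_iff _ _).mp h.ge)

/-- The Stone field of sets of a Boolean algebra. -/
def stField (A : Type) [BooleanAlgebra A] : SetField (StonePt A) where
  sets := Set.range (stSet (A := A))
  empty_mem := ⟨⊥, stSet_bot⟩
  compl_mem := by rintro s ⟨a, rfl⟩; exact ⟨aᶜ, stSet_compl a⟩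
  union_mem := by rintro s ⟨a, rfl⟩ t ⟨b, rfl⟩; exact ⟨a ⊔ b, stSet_sup a b⟩

/-- The Stone isomorphism. -/
noncomputable def stIso (A : Type) [BooleanAlgebra A] :
    letI := (stField A).ba; A ≃o (stField A).sets := by
  letI := (stField A).ba
  refine
    { toFun := fun a => ⟨stSet a, a, rfl⟩
      invFun := fun s => Classical.choose s.2
      left_inv := fun a => stSet_injective
        (Classical.choose_spec (Set.mem_range_self (f := stSet (A := A)) a))
      right_inv := fun s => Subtype.ext (Classical.choose_spec s.2)
      map_rel_iff' := ?_ }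
  intro a b
  have h := ((stField A).ba_isSetBA).2.2.2
  exact (h _ _).trans (stSet_subset_iff a b)

end Stone

section Transport

variable {T T' A A' : Type} [BooleanAlgebra T] [BooleanAlgebra T']
  [BooleanAlgebra A] [BooleanAlgebra A']

lemma oiso_map_compl (g : T ≃o T') (a : T) : g aᶜ = (g a)ᶜ := by
  have h : IsCompl (g a) (g aᶜ) :=
    ⟨disjoint_iff.2 (by rw [← g.map_inf, inf_compl_eq_bot, g.map_bot]),
     codisjoint_iff.2 (by rw [← g.map_sup, sup_compl_eq_top, g.map_top])⟩
  exact h.compl_eq.symm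

/-- Transport of a term structure along an order isomorphism. -/
def TmStruct.transport (S : TmStruct T) (g : T ≃o T') : TmStruct T' :=
  ⟨fun a b => g (S.app (g.symm a) (g.symm b)), fun a => g (S.bang (g.symm a))⟩

/-- Transport of the box operator along a pair of order isomorphisms. -/
def boxTransport (f : A ≃o A') (g : T ≃o T') (box : T → BFm → A) : T' → BFm → A' :=
  fun α φ => f (box (g.symm α) φ)

lemma denTm_transport (g : T ≃o T') (S : TmStruct T) (I : ℕ → T) (v : ℕ → T) (t : BTm) :
    denTm (S.transport g) (fun c => g (I c)) (fun x => g (v x)) t = g (denTm S I v t) := by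
  induction t with
  | var x => rfl
  | const c => rfl
  | zero => simp [denTm, g.map_bot]
  | neg t ih => simp [denTm, ih, oiso_map_compl]
  | sum a b iha ihb => simp [denTm, iha, ihb, g.map_sup]
  | app a b iha ihb => dsimp only [denTm]; rw [iha, ihb]; simp [TmStruct.transport]
  | bang t ih => dsimp only [denTm]; rw [ih]; simp [TmStruct.transport]

lemma bevalFm_transport (f : A ≃o A') (g : T ≃o T') (S : TmStruct T) (I : ℕ → T)
    (box : T → BFm → A) (θ : ℕ → A) (v : ℕ → T) (φ : BFm) :
    bevalFm (S.transport g) (fun c => g (I c)) (boxTransport f g box)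
      (fun p => f (θ p)) (fun x => g (v x)) φ = f (bevalFm S I box θ v φ) := by
  induction φ with
  | prop p => rfl
  | eq s t =>
      by_cases h : denTm S I v s = denTm S I v t
      · simp [bevalFm, denTm_transport, h, f.map_top]
      · simp [bevalFm, denTm_transport, h, g.injective.ne h, f.map_bot]
  | bot => simp [bevalFm, f.map_bot]
  | neg φ ih => simp [bevalFm, ih, oiso_map_compl]
  | or φ ψ ihφ ihψ => simp [bevalFm, ihφ, ihψ, f.map_sup]
  | box t φ => simp [bevalFm, boxTransport, denTm_transport, g.symm_apply_apply]

lemma IsFullLPB.transport {CS : BConstSpec} {S : TmStruct T} {I : ℕ → T}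
    {box : T → BFm → A} (h : IsFullLPB CS S I box) (f : A ≃o A') (g : T ≃o T') :
    IsFullLPB CS (S.transport g) (fun c => g (I c)) (boxTransport f g box) where
  appl α β φ ψ := by
    calc f (box (g.symm α) (φ.imp ψ)) ⊓ f (box (g.symm β) φ)
        = f (box (g.symm α) (φ.imp ψ) ⊓ box (g.symm β) φ) := (f.map_inf _ _).symm
      _ ≤ f (box (S.app (g.symm α) (g.symm β)) ψ) := f.monotone (h.appl _ _ _ _)
      _ = _ := by simp [boxTransport, TmStruct.transport, g.symm_apply_apply]
  sum α β φ := by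
    calc f (box (g.symm α) φ) ⊔ f (box (g.symm β) φ)
        = f (box (g.symm α) φ ⊔ box (g.symm β) φ) := (f.map_sup _ _).symm
      _ ≤ f (box (g.symm α ⊔ g.symm β) φ) := f.monotone (h.sum _ _ _)
      _ = _ := by simp [boxTransport, g.symm.map_sup]
  one φ hφ := by
    simp [boxTransport, g.symm.map_top, h.one φ hφ, f.map_top]
  cs c φ hc := by
    simp [boxTransport, g.symm_apply_apply, h.cs c φ hc, f.map_top]
  j4 α t φ := by
    calc f (box (g.symm α) φ)
        ≤ f (box (S.bang (g.symm α)) (.box t φ)) := f.monotone (h.j4 _ _ _)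
      _ = _ := by simp [boxTransport, TmStruct.transport, g.symm_apply_apply]
  jT α φ θ' v' := by
    have h1 := h.jT (g.symm α) φ (fun p => f.symm (θ' p)) (fun x => g.symm (v' x))
    have h2 := bevalFm_transport f g S I box (fun p => f.symm (θ' p))
      (fun x => g.symm (v' x)) φ
    simp only [OrderIso.apply_symm_apply] at h2
    calc f (box (g.symm α) φ) ≤ f (bevalFm S I box _ _ φ) := f.monotone h1
      _ = _ := h2.symm

end Transport

/-- **Bi-representation theorem.** Every full LP^B_CS algebra is bi-isomorphic to a
full LP^B_CS set algebra. -/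
theorem LPB_bi_representation (CS : BConstSpec) :
    ∀ (T A : Type) [BooleanAlgebra T] [BooleanAlgebra A]
      (S : TmStruct T) (I : ℕ → T) (box : T → BFm → A),
      IsFullLPB CS S I box → Nonempty (BiRep CS T A S I box) := by
  intro T A _ _ S I box h
  letI baA := (stField A).ba
  letI baT := (stField T).ba
  exact ⟨{
    X := StonePt A
    Y := StonePt T
    F := stField A
    G := stField T
    baA := baA
    baT := baT
    isSetA := (stField A).ba_isSetBA
    isSetT := (stField T).ba_isSetBA
    S' := S.transport (stIso T)
    I' := fun c => (stIso T) (I c)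
    box' := boxTransport (stIso A) (stIso T) box
    full' := h.transport (stIso A) (stIso T)
    f := stIso A
    g := stIso T
    compat_box := fun α φ => by
      simp [boxTransport, OrderIso.symm_apply_apply]
      exact congrArg (fun x => (stIso A) (box x φ)) ((stIso T).symm_apply_apply α).symm
    compat_I := fun c => rfl
    compat_app := fun α β => by
      simp [TmStruct.transport, OrderIso.symm_apply_apply]
      exact congrArg (fun x => (stIso T) x)
        (congrArg₂ S.app ((stIso T).symm_apply_apply α).symm ((stIso T).symm_apply_apply β).symm)
    compat_bang := fun α => by
      simp [TmStruct.transport, OrderIso.symm_apply_apply]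
      exact congrArg (fun x => (stIso T) (S.bang x)) ((stIso T).symm_apply_apply α).symm }⟩
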